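/- Assume 2K ≥ n where n = |V|, and let ℓ, ℓ' ∈ Rep. Then ℓ' is a predecessor of ℓ (i.e., ℓ' ≤ ℓ pointwise, ℓ' ≠ ℓ, and there is no ℓ'' ∈ Rep with ℓ' ≤ ℓ'' ≤ ℓ pointwise and ℓ'' distinct from both ℓ' and ℓ) if and only if ℓ' is obtained from ℓ by one left-shifting operation, i.e., there is a vertex v with ℓ'(v) = ℓ(v) − ε and ℓ'(u) = ℓ(u) for all u ≠ v. -/

import Mathlib

/-- A unit interval representation of `G`: distinct vertices are adjacent iff their
points are at distance at most `1`. -/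
def IsUIRep {V : Type*} (G : SimpleGraph V) (ℓ : V → ℝ) : Prop :=
  ∀ u v : V, u ≠ v → (G.Adj u v ↔ |ℓ u - ℓ v| ≤ 1)

/-- Two vertices are indistinguishable if they have the same closed neighborhood. -/
def Indist {V : Type*} (G : SimpleGraph V) (u v : V) : Prop :=
  ∀ w : V, (w = u ∨ G.Adj u w) ↔ (w = v ∨ G.Adj v w)

/-- `GridRep G lt K lbound ℓ`: `ℓ` belongs to `Rep(G, <, ε, lbound)` for `ε = 1/K`,
i.e. it is an `ε`-grid unit interval representation of `G` whose left-to-right order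
extends `lt` and which satisfies the lower bounds. -/
def GridRep {V : Type*} (G : SimpleGraph V) (lt : V → V → Prop) (K : ℕ) (lbound : V → ℝ)
    (ℓ : V → ℝ) : Prop :=
  IsUIRep G ℓ ∧ (∀ v : V, ∃ m : ℤ, ℓ v = m * (1 / (K : ℝ))) ∧
    (∀ u v : V, lt u v → ℓ u ≤ ℓ v) ∧ (∀ v : V, lbound v ≤ ℓ v)

/-- minimal element of a nonempty finite set w.r.t. a strict partial order. -/
lemma exists_lt_min {V : Type*} (lt : V → V → Prop)
    (hirr : ∀ v, ¬ lt v v)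
    (htrans : ∀ a b c, lt a b → lt b c → lt a c) :
    ∀ (n : ℕ) (s : Finset V), s.card ≤ n → s.Nonempty → ∃ a ∈ s, ∀ b ∈ s, ¬ lt b a := by
  classical
  intro n
  induction n with
  | zero =>
      intro s hcard hne
      obtain ⟨x, hx⟩ := hne
      have := Finset.card_pos.mpr ⟨x, hx⟩
      omega
  | succ n ih =>
      intro s hcard hne
      obtain ⟨x, hx⟩ := hne
      by_cases h : ∃ y ∈ s, lt y x
      · obtain ⟨y, hy, hyx⟩ := h
        set s' := s.filter (fun z => lt z x) with hs'
        have hxs' : x ∉ s' := by simp [hs', hirr x]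
        have hsub : s' ⊆ s := Finset.filter_subset _ _
        have hcard' : s'.card ≤ n := by
          have h1 : s'.card < s.card :=
            Finset.card_lt_card ((Finset.ssubset_iff_of_subset hsub).mpr ⟨x, hx, hxs'⟩)
          omega
        obtain ⟨a, ha, hmin⟩ := ih s' hcard' ⟨y, by simp [hs', hy, hyx]⟩
        refine ⟨a, hsub ha, ?_⟩
        intro b hb hba
        have hax : lt a x := (Finset.mem_filter.mp ha).2
        exact hmin b (Finset.mem_filter.mpr ⟨hb, htrans _ _ _ hba hax⟩) hba
      · exact ⟨x, hx, fun b hb hbx => h ⟨b, hb, hbx⟩⟩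

/-- for `2K ≥ n`, `ℓ'` is a predecessor of `ℓ` in `Rep` iff `ℓ'` is
obtained from `ℓ` by one left-shifting operation. -/
theorem stmt9 {V : Type*} [Fintype V] [DecidableEq V] (G : SimpleGraph V)
    (lt : V → V → Prop)
    (hirr : ∀ v : V, ¬ lt v v)
    (htrans : ∀ a b c : V, lt a b → lt b c → lt a c)
    (hcomp : ∀ u v : V, ¬ Indist G u v → lt u v ∨ lt v u)
    (K : ℕ) (hK : 0 < K) (h2K : Fintype.card V ≤ 2 * K) (lbound : V → ℝ)
    (ℓ ℓ' : V → ℝ) (hℓ : GridRep G lt K lbound ℓ) (hℓ' : GridRep G lt K lbound ℓ') :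
    ((∀ v : V, ℓ' v ≤ ℓ v) ∧ ℓ' ≠ ℓ ∧
      ¬ ∃ ℓ'' : V → ℝ, GridRep G lt K lbound ℓ'' ∧ (∀ v : V, ℓ' v ≤ ℓ'' v) ∧
        (∀ v : V, ℓ'' v ≤ ℓ v) ∧ ℓ'' ≠ ℓ' ∧ ℓ'' ≠ ℓ) ↔
      ∃ u : V, ℓ' = Function.update ℓ u (ℓ u - 1 / (K : ℝ)) := by
  classical
  set ε : ℝ := 1 / (K : ℝ) with hε
  have hKR : (0:ℝ) < K := by exact_mod_cast hK
  have hεpos : 0 < ε := by positivity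
  have hKε : (K:ℝ) * ε = 1 := by rw [hε]; exact mul_one_div_cancel hKR.ne'
  have hεle1 : ε ≤ 1 := by
    rw [hε]
    rw [div_le_one hKR]
    exact_mod_cast hK
  obtain ⟨hUI, hgrid, hord, hlb⟩ := hℓ
  obtain ⟨hUI', hgrid', hord', hlb'⟩ := hℓ'
  -- grid helpers
  have gridstep : ∀ x y : ℝ, (∃ a : ℤ, x = a * ε) → (∃ b : ℤ, y = b * ε) →
      x < y → x + ε ≤ y := by
    rintro x y ⟨a, rfl⟩ ⟨b, rfl⟩ h
    have hab : a < b := by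
      by_contra hc
      push_neg at hc
      have : (b:ℝ) * ε ≤ (a:ℝ) * ε :=
        mul_le_mul_of_nonneg_right (by exact_mod_cast hc) hεpos.le
      linarith
    have h2 : ((a:ℝ) + 1) * ε ≤ (b:ℝ) * ε := by
      have : ((a:ℝ) + 1) ≤ (b:ℝ) := by exact_mod_cast hab
      exact mul_le_mul_of_nonneg_right this hεpos.le
    linarith
  have gridgap : ∀ x y : ℝ, (∃ a : ℤ, x = a * ε) → (∃ b : ℤ, y = b * ε) →
      x + 1 < y → x + 1 + ε ≤ y := by
    rintro x y ⟨a, rfl⟩ ⟨b, rfl⟩ h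
    have h1 : ((a:ℝ) + K) * ε < (b:ℝ) * ε := by
      have : (a:ℝ) * ε + (K:ℝ) * ε < (b:ℝ) * ε := by rw [hKε]; linarith
      linarith [this]
    have hab : a + (K:ℤ) < b := by
      by_contra hc
      push_neg at hc
      have : (b:ℝ) ≤ (a:ℝ) + K := by exact_mod_cast hc
      nlinarith [hεpos]
    have h2 : ((a:ℝ) + K + 1) * ε ≤ (b:ℝ) * ε := by
      have : ((a:ℝ) + K + 1) ≤ (b:ℝ) := by exact_mod_cast hab
      exact mul_le_mul_of_nonneg_right this hεpos.le
    nlinarith [hKε]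
  have nonadj_not_indist : ∀ a b : V, a ≠ b → ¬ G.Adj a b → ¬ Indist G a b := by
    intro a b hne hnadj hind
    rcases (hind a).mp (Or.inl rfl) with h | h
    · exact hne h
    · exact hnadj h.symm
  constructor
  · -- forward direction: predecessor → single shift
    rintro ⟨hle, hne, hnomid⟩
    -- the set of shifted vertices
    set D : Finset V := Finset.univ.filter (fun v => ℓ' v < ℓ v) with hD
    have hmemD : ∀ v : V, v ∈ D ↔ ℓ' v < ℓ v := by
      intro v; simp [hD]
    have hDne : D.Nonempty := by
      by_contra hc
      apply hne
      funext v
      have hv : v ∉ D := fun h => hc ⟨v, h⟩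
      rw [hmemD] at hv
      exact le_antisymm (hle v) (not_lt.mp hv)
    have hDshift : ∀ v ∈ D, ℓ' v + ε ≤ ℓ v := by
      intro v hv
      exact gridstep _ _ (hgrid' v) (hgrid v) ((hmemD v).mp hv)
    -- Claim A : there is a "free" shifted vertex
    have claimA : ∃ u, u ∈ D ∧ (∀ w, G.Adj u w → ℓ w ≠ ℓ u + 1) ∧
        (∀ w, w ≠ u → ¬ G.Adj u w → ℓ w ≠ ℓ u - (1 + ε)) ∧
        (∀ a, lt a u → ℓ a ≠ ℓ u) := by
      by_contra hA
      push_neg at hA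
      -- grid coordinates
      have hm : ∀ v : V, ∃ m : ℤ, ℓ v = (m:ℝ) * ε := hgrid
      set m : V → ℤ := fun v => Classical.choose (hm v) with hmdef
      have hmspec : ∀ v, ℓ v = (m v : ℝ) * ε := fun v => Classical.choose_spec (hm v)
      haveI : NeZero (2*K+1) := ⟨by omega⟩
      set res : V → ZMod (2*K+1) := fun v => ((m v : ℤ) : ZMod (2*K+1)) with hres
      -- step : every shifted vertex yields another at residue +K
      have step : ∀ v ∈ D, ∃ w ∈ D, res w = res v + (K : ZMod (2*K+1)) := by
        intro v hv
        set S : Finset V := D.filter (fun w => ℓ w = ℓ v) with hS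
        have hvS : v ∈ S := by simp [hS, hv]
        obtain ⟨a, haS, hamin⟩ :=
          exists_lt_min lt hirr htrans S.card S le_rfl ⟨v, hvS⟩
        have haD : a ∈ D := (Finset.mem_filter.mp haS).1
        have haℓ : ℓ a = ℓ v := (Finset.mem_filter.mp haS).2
        have hresa : res a = res v := by
          have : (m a : ℝ) * ε = (m v : ℝ) * ε := by
            rw [← hmspec, ← hmspec, haℓ]
          have hma : m a = m v := by
            have := mul_right_cancel₀ (ne_of_gt hεpos) this
            exact_mod_cast this
          simp [hres, hma]
        rw [← hresa]
        by_cases hR : ∀ w, G.Adj a w → ℓ w ≠ ℓ a + 1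
        · by_cases hL : ∀ w, w ≠ a → ¬ G.Adj a w → ℓ w ≠ ℓ a - (1 + ε)
          · -- O-blocker exists, contradicting minimality
            obtain ⟨b, hba, hbℓ⟩ := hA a haD hR hL
            exfalso
            have hbD : b ∈ D := by
              rw [hmemD]
              have h1 : ℓ' b ≤ ℓ' a := hord' _ _ hba
              have h2 : ℓ' a + ε ≤ ℓ a := hDshift a haD
              rw [hbℓ]; linarith
            exact hamin b (Finset.mem_filter.mpr ⟨hbD, hbℓ.trans haℓ⟩) hba
          · -- L-blocker : non-neighbor at exactly 1+ε to the left
            push_neg at hL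
            obtain ⟨w, hwa, hwnadj, hwℓ⟩ := hL
            have hlt : lt w a := by
              rcases hcomp a w (nonadj_not_indist a w (Ne.symm hwa) hwnadj) with h | h
              · exfalso
                have := hord a w h
                rw [hwℓ] at this
                linarith
              · exact h
            have hwD : w ∈ D := by
              rw [hmemD]
              have h1 : ℓ' w ≤ ℓ' a := hord' _ _ hlt
              have hnadj' : ¬ |ℓ' a - ℓ' w| ≤ 1 := by
                intro hc
                exact hwnadj ((hUI' a w (Ne.symm hwa)).mpr hc)
              push_neg at hnadj'
              have h2 : ℓ' w + 1 < ℓ' a := by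
                rcases lt_abs.mp hnadj' with h | h
                · linarith
                · linarith
              have h3 : ℓ' w + 1 + ε ≤ ℓ' a := gridgap _ _ (hgrid' w) (hgrid' a) h2
              have h4 : ℓ' a + ε ≤ ℓ a := hDshift a haD
              rw [hwℓ]; linarith
            refine ⟨w, hwD, ?_⟩
            -- m w = m a - (K+1)
            have hmw : m w = m a - (K + 1) := by
              have h1 : (m w : ℝ) * ε = ((m a - (K+1) : ℤ) : ℝ) * ε := by
                rw [← hmspec, hwℓ, hmspec a]
                push_cast
                nlinarith [hKε]
              have := mul_right_cancel₀ (ne_of_gt hεpos) h1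
              exact_mod_cast this
            have hzero : ((2*K+1 : ℕ) : ZMod (2*K+1)) = 0 := ZMod.natCast_self _
            simp only [hres, hmw]
            push_cast
            push_cast at hzero
            linear_combination -hzero
        · -- R-blocker : neighbor at exactly 1 to the right
          push_neg at hR
          obtain ⟨w, hwadj, hwℓ⟩ := hR
          have hwD : w ∈ D := by
            rw [hmemD]
            have h1 : |ℓ' a - ℓ' w| ≤ 1 := (hUI' a w hwadj.ne).mp hwadj
            rw [abs_le] at h1
            have h2 : ℓ' a + ε ≤ ℓ a := hDshift a haD
            rw [hwℓ]
            linarith [h1.1, h1.2]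
          refine ⟨w, hwD, ?_⟩
          have hmw : m w = m a + (K:ℤ) := by
            have h1 : (m w : ℝ) * ε = ((m a + (K:ℤ) : ℤ) : ℝ) * ε := by
              rw [← hmspec, hwℓ, hmspec a]
              push_cast
              linear_combination -hKε
            have h2 := mul_right_cancel₀ (ne_of_gt hεpos) h1
            exact_mod_cast h2
          simp only [hres, hmw]
          push_cast
          ring
      -- residue counting: residues of D are closed under +K, hence all of ZMod (2K+1)
      set R : Finset (ZMod (2*K+1)) := D.image res with hRdef
      have hclosure : ∀ r ∈ R, r + (K : ZMod (2*K+1)) ∈ R := by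
        intro r hr
        obtain ⟨v, hv, rfl⟩ := Finset.mem_image.mp hr
        obtain ⟨w, hw, hresw⟩ := step v hv
        exact Finset.mem_image.mpr ⟨w, hw, hresw⟩
      obtain ⟨v0, hv0⟩ := hDne
      have hiter : ∀ t : ℕ, res v0 + (t : ZMod (2*K+1)) * (K : ZMod (2*K+1)) ∈ R := by
        intro t
        induction t with
        | zero =>
            simp only [Nat.cast_zero, zero_mul, add_zero]
            exact Finset.mem_image_of_mem res hv0
        | succ t ih =>
            have h1 := hclosure _ ih
            have h2 : res v0 + ((t+1 : ℕ) : ZMod (2*K+1)) * (K : ZMod (2*K+1))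
                = res v0 + (t : ZMod (2*K+1)) * (K : ZMod (2*K+1)) + (K : ZMod (2*K+1)) := by
              push_cast
              ring
            rw [h2]
            exact h1
      have hcop : Nat.Coprime K (2*K+1) := by
        rw [show 2*K+1 = K*2+1 by ring]
        exact (Nat.coprime_mul_left_add_right K 1 2).mpr (Nat.coprime_one_right K)
      have hcover : ∀ τ : ZMod (2*K+1), τ ∈ R := by
        intro τ
        set uu := ZMod.unitOfCoprime K hcop with huu
        have hu : (uu : ZMod (2*K+1)) = (K : ZMod (2*K+1)) := ZMod.coe_unitOfCoprime K hcop
        set t : ℕ := ((τ - res v0) * ((uu⁻¹ : (ZMod (2*K+1))ˣ) : ZMod (2*K+1))).val with ht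
        have h1 := hiter t
        have h2 : (t : ZMod (2*K+1))
            = (τ - res v0) * ((uu⁻¹ : (ZMod (2*K+1))ˣ) : ZMod (2*K+1)) :=
          ZMod.natCast_rightInverse _
        rw [h2, ← hu, Units.inv_mul_cancel_right] at h1
        have h3 : res v0 + (τ - res v0) = τ := by ring
        rwa [h3] at h1
      have hcard1 : 2*K+1 ≤ D.card := by
        have h1 : R = Finset.univ := Finset.eq_univ_iff_forall.mpr hcover
        have h2 : R.card = 2*K+1 := by rw [h1, Finset.card_univ, ZMod.card]
        have h3 : R.card ≤ D.card := Finset.card_image_le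
        omega
      have hcard2 : D.card ≤ Fintype.card V := by
        simp only [← Finset.card_univ]
        exact Finset.card_le_univ D
      omega
    -- Claim B : shifting a free vertex gives a valid representation
    obtain ⟨u, huD, hfreeR, hfreeL, hfreeO⟩ := claimA
    refine ⟨u, ?_⟩
    set g : V → ℝ := Function.update ℓ u (ℓ u - ε) with hg
    have hgu : g u = ℓ u - ε := Function.update_self u _ ℓ
    have hgv : ∀ v, v ≠ u → g v = ℓ v := fun v hv => Function.update_of_ne hv _ ℓ
    have hgridp1 : ∃ b : ℤ, ℓ u + 1 = (b:ℝ) * ε := by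
      obtain ⟨c, hc⟩ := hgrid u
      refine ⟨c + K, ?_⟩
      rw [hc]
      push_cast
      linear_combination -hKε
    have hadj_iff : ∀ w, w ≠ u → (G.Adj u w ↔ |ℓ u - ε - ℓ w| ≤ 1) := by
      intro w hw
      constructor
      · intro hadj
        have h1 : |ℓ u - ℓ w| ≤ 1 := (hUI u w (Ne.symm hw)).mp hadj
        rw [abs_le] at h1 ⊢
        rcases le_or_gt (ℓ w) (ℓ u) with hcase | hcase
        · constructor <;> linarith [h1.1, h1.2]
        · have hne1 : ℓ w ≠ ℓ u + 1 := hfreeR w hadj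
          have hlt1 : ℓ w < ℓ u + 1 := lt_of_le_of_ne (by linarith [h1.1]) hne1
          have h2 : ℓ w + ε ≤ ℓ u + 1 := gridstep _ _ (hgrid w) hgridp1 hlt1
          constructor <;> linarith
      · intro habs
        by_contra hnadj
        have h1 : ¬ |ℓ u - ℓ w| ≤ 1 := fun hc => hnadj ((hUI u w (Ne.symm hw)).mpr hc)
        push_neg at h1
        rw [abs_le] at habs
        rcases lt_abs.mp h1 with h | h
        · have hne1 : ℓ w ≠ ℓ u - (1 + ε) := hfreeL w hw hnadj
          have h2 : ℓ w + 1 + ε ≤ ℓ u := gridgap _ _ (hgrid w) (hgrid u) (by linarith)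
          have h3 : ℓ w + 1 + ε < ℓ u := lt_of_le_of_ne h2 (fun hc => hne1 (by linarith))
          have hgridw : ∃ b : ℤ, ℓ w + 1 + ε = (b:ℝ) * ε := by
            obtain ⟨c, hc⟩ := hgrid w
            refine ⟨c + K + 1, ?_⟩
            rw [hc]
            push_cast
            linear_combination -hKε
          have h4 : ℓ w + 1 + ε + ε ≤ ℓ u := gridstep _ _ hgridw (hgrid u) h3
          linarith [habs.2]
        · linarith [habs.1, hεpos]
    have hgGR : GridRep G lt K lbound g := by
      refine ⟨?_, ?_, ?_, ?_⟩
      · intro a b hab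
        by_cases ha : a = u
        · have hb : b ≠ u := fun h => hab (ha.trans h.symm)
          rw [ha, hgu, hgv b hb]
          exact hadj_iff b hb
        · by_cases hb : b = u
          · rw [hb, hgv a ha, hgu, G.adj_comm, abs_sub_comm]
            exact hadj_iff a ha
          · rw [hgv a ha, hgv b hb]
            exact hUI a b hab
      · intro v
        by_cases hv : v = u
        · obtain ⟨c, hc⟩ := hgrid u
          refine ⟨c - 1, ?_⟩
          rw [hv, hgu, hc]
          push_cast
          ring
        · rw [hgv v hv]
          exact hgrid v
      · intro a b hab
        by_cases hb : b = u
        · have hau : lt a u := hb ▸ hab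
          have ha : a ≠ u := fun h => hirr u (h ▸ hau)
          rw [hb, hgv a ha, hgu]
          have h1 : ℓ a ≤ ℓ u := hord a u hau
          have h2 : ℓ a ≠ ℓ u := hfreeO a hau
          have h3 := gridstep _ _ (hgrid a) (hgrid u) (lt_of_le_of_ne h1 h2)
          linarith
        · by_cases ha : a = u
          · have hub : lt u b := ha ▸ hab
            rw [ha, hgu, hgv b hb]
            linarith [hord u b hub]
          · rw [hgv a ha, hgv b hb]
            exact hord a b hab
      · intro v
        by_cases hv : v = u
        · rw [hv, hgu]
          have := hlb' u
          linarith [hDshift u huD]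
        · rw [hgv v hv]
          exact hlb v
    have hgmid1 : ∀ v, ℓ' v ≤ g v := by
      intro v
      by_cases hv : v = u
      · rw [hv, hgu]
        linarith [hDshift u huD]
      · rw [hgv v hv]
        exact hle v
    have hgmid2 : ∀ v, g v ≤ ℓ v := by
      intro v
      by_cases hv : v = u
      · rw [hv, hgu]
        linarith
      · rw [hgv v hv]
    have hgneℓ : g ≠ ℓ := by
      intro h
      have h1 := congrFun h u
      rw [hgu] at h1
      linarith
    by_cases hgeq : g = ℓ'
    · exact hgeq.symm
    · exact absurd ⟨g, hgGR, hgmid1, hgmid2, hgeq, hgneℓ⟩ hnomid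
  · -- backward direction: single shift → predecessor
    rintro ⟨u, rfl⟩
    refine ⟨?_, ?_, ?_⟩
    · intro v
      by_cases hv : v = u
      · subst hv; simp [Function.update_self]; linarith
      · simp [Function.update_of_ne hv]
    · intro h
      have := congrFun h u
      simp [Function.update_self] at this
      linarith
    · rintro ⟨g, ⟨hgUI, hggrid, hgord, hglb⟩, hge, hgle, hgne', hgne⟩
      have hfix : ∀ v, v ≠ u → g v = ℓ v := by
        intro v hv
        have h1 := hge v
        have h2 := hgle v
        rw [Function.update_of_ne hv] at h1
        exact le_antisymm h2 h1
      have h1 : ℓ u - ε ≤ g u := by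
        have := hge u
        rwa [Function.update_self] at this
      have h2 : g u ≤ ℓ u := hgle u
      rcases eq_or_lt_of_le h2 with heq | hlt
      · exact hgne (funext fun v => by
          by_cases hv : v = u
          · subst hv; exact heq
          · exact hfix v hv)
      · have h3 : g u + ε ≤ ℓ u := gridstep _ _ (hggrid u) (hgrid u) hlt
        have h4 : g u = ℓ u - ε := by linarith
        exact hgne' (funext fun v => by
          by_cases hv : v = u
          · subst hv; rw [Function.update_self]; exact h4
          · rw [Function.update_of_ne hv]; exact hfix v hv)
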